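/- Let d ≥ 1, q ≥ 2, Ω = {1,…,q}^{ℤ^d} with the Borel σ-algebra, and let ν be a probability measure on Ω with ν([η_{Λ_n}]) > 0 for all n and all η. For each x ∈ ℤ^d and each state j ∈ {1,…,q}, let c_x(·, j) : Ω → ℝ be a bounded measurable function with inf_{ω ∈ Ω, j} c_x(ω, j) ≥ δ for some δ > 0. Define Γ_n(x, j, η) = ∫_{[η_{Λ_n}]} c_x(ω, j) dν(ω) and α_n(x) = Σ_{η_{Λ_n}} Σ_{i ≠ η_x} Φ( Γ_n(x, η_x, η^{x,i}), Γ_n(x, i, η) ), where the outer sum runs over all configurations η_{Λ_n} on Λ_n. Then for every n ≥ 1 and every x ∈ Λ_n one has 0 ≤ α_n(x) ≤ α_{n+1}(x). -/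

import Mathlib

open MeasureTheory

/-- The centred box `Λ_n = ([-n,n] ∩ ℤ)^d` in `ℤ^d`. -/
noncomputable def centredBox (d : ℕ) (n : ℕ) : Finset (Fin d → ℤ) :=
  Fintype.piFinset fun _ => Finset.Icc (-(n : ℤ)) (n : ℤ)

/-- The cylinder set `[η_{Λ_n}]` determined by a configuration `σ` on `Λ_n`. -/
def cylinder (d q n : ℕ) (σ : ↥(centredBox d n) → Fin q) :
    Set ((Fin d → ℤ) → Fin q) :=
  {ω | ∀ z : ↥(centredBox d n), ω z.1 = σ z}

/-- `Γ_n(x, j, η) = ∫_{[η_{Λ_n}]} c_x(ω, j) dν(ω)`. -/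
noncomputable def Gamma (d q : ℕ) (ν : Measure ((Fin d → ℤ) → Fin q))
    (c : (Fin d → ℤ) → Fin q → ((Fin d → ℤ) → Fin q) → ℝ) (n : ℕ)
    (x : Fin d → ℤ) (j : Fin q)
    (σ : ↥(centredBox d n) → Fin q) : ℝ :=
  ∫ ω in cylinder d q n σ, c x j ω ∂ν

/-- The kernel `Φ(u,v) = (u − v)(log u − log v)`. -/
noncomputable def Phi (u v : ℝ) : ℝ := (u - v) * (Real.log u - Real.log v)

/-- `α_n(x) = Σ_{η_{Λ_n}} Σ_{i ≠ η_x} Φ(Γ_n(x, η_x, η^{x,i}), Γ_n(x, i, η))`. -/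
noncomputable def alpha (d q : ℕ) (ν : Measure ((Fin d → ℤ) → Fin q))
    (c : (Fin d → ℤ) → Fin q → ((Fin d → ℤ) → Fin q) → ℝ) (n : ℕ)
    (x : Fin d → ℤ) : ℝ :=
  if hx : x ∈ centredBox d n then
    ∑ σ : ↥(centredBox d n) → Fin q,
      ∑ i ∈ Finset.univ.filter fun i : Fin q => i ≠ σ ⟨x, hx⟩,
        Phi (Gamma d q ν c n x (σ ⟨x, hx⟩) (Function.update σ ⟨x, hx⟩ i))
          (Gamma d q ν c n x i σ)
  else 0



lemma Phi_nonneg {u v : ℝ} (hu : 0 < u) (hv : 0 < v) : 0 ≤ Phi u v := by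
  unfold Phi
  rcases le_total v u with h | h
  · have := Real.log_le_log hv h
    nlinarith
  · have := Real.log_le_log hu h
    nlinarith

lemma logSum2 {a1 a2 b1 b2 : ℝ} (ha1 : 0 < a1) (ha2 : 0 < a2) (hb1 : 0 < b1) (hb2 : 0 < b2) :
    (a1 + a2) * Real.log ((a1 + a2) / (b1 + b2)) ≤
      a1 * Real.log (a1 / b1) + a2 * Real.log (a2 / b2) := by
  have hs : (0:ℝ) < b1 + b2 := by linarith
  have key := Real.convexOn_mul_log.2 (Set.mem_Ici.2 (div_pos ha1 hb1).le)
      (Set.mem_Ici.2 (div_pos ha2 hb2).le)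
      (div_pos hb1 hs).le (div_pos hb2 hs).le (by field_simp)
  simp only [smul_eq_mul] at key
  have e1 : b1 / (b1+b2) * (a1/b1) + b2/(b1+b2) * (a2/b2) = (a1+a2)/(b1+b2) := by
    field_simp; try ring
  rw [e1] at key
  have key2 := mul_le_mul_of_nonneg_left key hs.le
  have h0 : (b1+b2) * ((a1+a2)/(b1+b2) * Real.log ((a1+a2)/(b1+b2)))
      = (a1+a2) * Real.log ((a1+a2)/(b1+b2)) := by field_simp; try ring
  have h1 : (b1+b2) * (b1/(b1+b2) * (a1/b1 * Real.log (a1/b1)))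
      = a1 * Real.log (a1/b1) := by field_simp; try ring
  have h2 : (b1+b2) * (b2/(b1+b2) * (a2/b2 * Real.log (a2/b2)))
      = a2 * Real.log (a2/b2) := by field_simp; try ring
  nlinarith [key2]

lemma Phi_eq {u v : ℝ} (hu : 0 < u) (hv : 0 < v) :
    Phi u v = u * Real.log (u/v) + v * Real.log (v/u) := by
  unfold Phi
  rw [Real.log_div hu.ne' hv.ne', Real.log_div hv.ne' hu.ne']
  ring

lemma Phi_add_le {u1 u2 v1 v2 : ℝ} (hu1 : 0 < u1) (hu2 : 0 < u2)
    (hv1 : 0 < v1) (hv2 : 0 < v2) :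
    Phi (u1 + u2) (v1 + v2) ≤ Phi u1 v1 + Phi u2 v2 := by
  rw [Phi_eq (by linarith) (by linarith), Phi_eq hu1 hv1, Phi_eq hu2 hv2]
  have h1 := logSum2 hu1 hu2 hv1 hv2
  have h2 := logSum2 hv1 hv2 hu1 hu2
  linarith

lemma Phi_sum_le {ι : Type*} {t : Finset ι} (ht : t.Nonempty) {u v : ι → ℝ}
    (hu : ∀ i ∈ t, 0 < u i) (hv : ∀ i ∈ t, 0 < v i) :
    Phi (∑ i ∈ t, u i) (∑ i ∈ t, v i) ≤ ∑ i ∈ t, Phi (u i) (v i) := by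
  induction ht using Finset.Nonempty.cons_induction with
  | singleton i => simp
  | cons i t hit htne ih =>
    rw [Finset.sum_cons, Finset.sum_cons, Finset.sum_cons]
    have h1 : 0 < ∑ j ∈ t, u j :=
      Finset.sum_pos (fun j hj => hu j (Finset.mem_cons_of_mem hj)) htne
    have h2 : 0 < ∑ j ∈ t, v j :=
      Finset.sum_pos (fun j hj => hv j (Finset.mem_cons_of_mem hj)) htne
    calc Phi (u i + ∑ j ∈ t, u j) (v i + ∑ j ∈ t, v j)
        ≤ Phi (u i) (v i) + Phi (∑ j ∈ t, u j) (∑ j ∈ t, v j) :=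
          Phi_add_le (hu i (Finset.mem_cons_self i t)) h1 (hv i (Finset.mem_cons_self i t)) h2
      _ ≤ _ := by
          have := ih (fun j hj => hu j (Finset.mem_cons_of_mem hj))
            (fun j hj => hv j (Finset.mem_cons_of_mem hj))
          linarith



lemma measurableSet_cylinder (d q n : ℕ) (σ : ↥(centredBox d n) → Fin q) :
    MeasurableSet (cylinder d q n σ) := by
  have : _root_.cylinder d q n σ = ⋂ z : ↥(centredBox d n), (fun ω => ω z.1) ⁻¹' {σ z} := by
    ext ω
    simp only [_root_.cylinder, Set.mem_setOf_eq, Set.mem_iInter, Set.mem_preimage,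
      Set.mem_singleton_iff]
  rw [this]
  exact MeasurableSet.iInter fun z => (measurable_pi_apply z.1) (measurableSet_singleton _)

lemma centredBox_subset_succ (d n : ℕ) : centredBox d n ⊆ centredBox d (n+1) := by
  apply Fintype.piFinset_subset
  intro a
  apply Finset.Icc_subset_Icc <;> push_cast <;> omega

/-- Restriction of a configuration on `Λ_{n+1}` to `Λ_n`. -/
def resCfg (d q n : ℕ) (τ : ↥(centredBox d (n+1)) → Fin q) : ↥(centredBox d n) → Fin q :=
  fun z => τ ⟨z.1, centredBox_subset_succ d n z.2⟩

/-- The fiber of configurations on `Λ_{n+1}` extending `σ`. -/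
noncomputable def fiber (d q n : ℕ) (σ : ↥(centredBox d n) → Fin q) :
    Finset (↥(centredBox d (n+1)) → Fin q) := by
  classical exact Finset.univ.filter (fun τ => resCfg d q n τ = σ)

lemma mem_fiber {d q n : ℕ} {σ : ↥(centredBox d n) → Fin q}
    {τ : ↥(centredBox d (n+1)) → Fin q} :
    τ ∈ fiber d q n σ ↔ resCfg d q n τ = σ := by
  classical simp [fiber]

lemma fiber_nonempty (d q n : ℕ) (hq : 0 < q) (σ : ↥(centredBox d n) → Fin q) :
    (fiber d q n σ).Nonempty := by
  classical
  refine ⟨fun z => if h : z.1 ∈ centredBox d n then σ ⟨z.1, h⟩ else ⟨0, hq⟩, ?_⟩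
  rw [mem_fiber]
  funext z
  simp [resCfg, z.2]

lemma cylinder_succ_eq (d q n : ℕ) (σ : ↥(centredBox d n) → Fin q) :
    cylinder d q n σ = ⋃ τ ∈ fiber d q n σ, cylinder d q (n+1) τ := by
  ext ω
  constructor
  · intro h
    refine Set.mem_iUnion₂.2 ⟨fun z : ↥(centredBox d (n+1)) => ω z.1, ?_, fun z => rfl⟩
    rw [mem_fiber]; funext z; exact h z
  · intro h
    obtain ⟨τ, hτ, hω⟩ := Set.mem_iUnion₂.1 h
    rw [mem_fiber] at hτ
    intro z
    have := hω ⟨z.1, centredBox_subset_succ d n z.2⟩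
    rw [this, ← hτ]; rfl

lemma fiber_disjoint (d q n : ℕ) (σ : ↥(centredBox d n) → Fin q) :
    Set.Pairwise ↑(fiber d q n σ) (Function.onFun Disjoint (fun τ => cylinder d q (n+1) τ)) := by
  intro τ1 _ τ2 _ hne
  refine Set.disjoint_left.2 fun ω h1 h2 => hne ?_
  funext z
  exact (h1 z).symm.trans (h2 z)

lemma Gamma_succ (d q : ℕ) (ν : Measure ((Fin d → ℤ) → Fin q)) [IsProbabilityMeasure ν]
    (c : (Fin d → ℤ) → Fin q → ((Fin d → ℤ) → Fin q) → ℝ) (n : ℕ)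
    (x : Fin d → ℤ) (j : Fin q) (hint : Integrable (c x j) ν)
    (σ : ↥(centredBox d n) → Fin q) :
    Gamma d q ν c n x j σ = ∑ τ ∈ fiber d q n σ, Gamma d q ν c (n+1) x j τ := by
  unfold Gamma
  rw [cylinder_succ_eq]
  exact integral_biUnion_finset _ (fun τ _ => measurableSet_cylinder d q (n+1) τ)
    (fiber_disjoint d q n σ) (fun τ _ => hint.integrableOn)

lemma Gamma_pos (d q : ℕ) (ν : Measure ((Fin d → ℤ) → Fin q)) [IsProbabilityMeasure ν]
    (hν : ∀ (n : ℕ) (σ : ↥(centredBox d n) → Fin q), 0 < ν (cylinder d q n σ))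
    (c : (Fin d → ℤ) → Fin q → ((Fin d → ℤ) → Fin q) → ℝ) (n : ℕ)
    (x : Fin d → ℤ) (j : Fin q) (hint : Integrable (c x j) ν)
    {δ : ℝ} (hδ : 0 < δ) (hc_lb : ∀ ω, δ ≤ c x j ω)
    (σ : ↥(centredBox d n) → Fin q) :
    0 < Gamma d q ν c n x j σ := by
  have hm := measurableSet_cylinder d q n σ
  have hfin : ν (cylinder d q n σ) ≠ ⊤ := measure_ne_top ν _
  have h := setIntegral_ge_of_const_le_real hm hfin (fun ω _ => hc_lb ω) hint.integrableOn
  have : 0 < δ * (ν (cylinder d q n σ)).toReal :=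
    mul_pos hδ (ENNReal.toReal_pos (hν n σ).ne' hfin)
  exact lt_of_lt_of_le this h

lemma resCfg_update (d q n : ℕ) (τ : ↥(centredBox d (n+1)) → Fin q)
    (x : Fin d → ℤ) (hx : x ∈ centredBox d n) (i : Fin q) :
    resCfg d q n (Function.update τ ⟨x, centredBox_subset_succ d n hx⟩ i)
      = Function.update (resCfg d q n τ) ⟨x, hx⟩ i := by
  classical
  funext z
  simp only [resCfg, Function.update_apply, Subtype.ext_iff]

lemma sum_fiber_update {d q n : ℕ} (σ : ↥(centredBox d n) → Fin q)
    (x : Fin d → ℤ) (hx : x ∈ centredBox d n) (i : Fin q)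
    (f : (↥(centredBox d (n+1)) → Fin q) → ℝ) :
    ∑ τ' ∈ fiber d q n (Function.update σ ⟨x, hx⟩ i), f τ'
      = ∑ τ ∈ fiber d q n σ, f (Function.update τ ⟨x, centredBox_subset_succ d n hx⟩ i) := by
  classical
  set x1 : ↥(centredBox d (n+1)) := ⟨x, centredBox_subset_succ d n hx⟩ with hx1
  refine Finset.sum_bij' (fun τ' _ => Function.update τ' x1 (σ ⟨x, hx⟩))
    (fun τ _ => Function.update τ x1 i) ?_ ?_ ?_ ?_ ?_
  · intro τ' hτ'
    rw [mem_fiber] at hτ' ⊢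
    show resCfg d q n (Function.update τ' x1 (σ ⟨x, hx⟩)) = σ
    rw [hx1, resCfg_update (hx := hx), hτ', Function.update_idem, Function.update_eq_self]
  · intro τ hτ
    rw [mem_fiber] at hτ ⊢
    show resCfg d q n (Function.update τ x1 i) = Function.update σ ⟨x, hx⟩ i
    rw [hx1, resCfg_update (hx := hx), hτ]
  · intro τ' hτ'
    rw [mem_fiber] at hτ'
    have h1 : τ' x1 = i := by
      have := congrFun hτ' ⟨x, hx⟩
      simpa [resCfg, x1] using this
    show Function.update (Function.update τ' x1 (σ ⟨x, hx⟩)) x1 i = τ'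
    rw [Function.update_idem, ← h1, Function.update_eq_self]
  · intro τ hτ
    rw [mem_fiber] at hτ
    have h1 : τ x1 = σ ⟨x, hx⟩ := by
      have := congrFun hτ ⟨x, hx⟩
      simpa [resCfg, x1] using this
    show Function.update (Function.update τ x1 i) x1 (σ ⟨x, hx⟩) = τ
    rw [Function.update_idem, ← h1, Function.update_eq_self]
  · intro τ' hτ'
    rw [mem_fiber] at hτ'
    have h1 : τ' x1 = i := by
      have := congrFun hτ' ⟨x, hx⟩
      simpa [resCfg, x1] using this
    show f τ' = f (Function.update (Function.update τ' x1 (σ ⟨x, hx⟩)) x1 i)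
    rw [Function.update_idem, ← h1, Function.update_eq_self]

lemma sum_fiber_split (d q n : ℕ) (hq : 0 < q)
    (f : (↥(centredBox d (n+1)) → Fin q) → ℝ) :
    ∑ τ : ↥(centredBox d (n+1)) → Fin q, f τ
      = ∑ σ : ↥(centredBox d n) → Fin q, ∑ τ ∈ fiber d q n σ, f τ := by
  classical
  rw [← Finset.sum_fiberwise Finset.univ (resCfg d q n) f]
  refine Finset.sum_congr rfl fun σ _ => Finset.sum_congr ?_ fun _ _ => rfl
  simp only [fiber]

/-- Monotonicity of `α_n(x)` in the volume: `0 ≤ α_n(x) ≤ α_{n+1}(x)`. -/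
theorem alpha_nonneg_mono (d q : ℕ) (hd : 1 ≤ d) (hq : 2 ≤ q)
    (ν : Measure ((Fin d → ℤ) → Fin q)) [IsProbabilityMeasure ν]
    (hν : ∀ (n : ℕ) (σ : ↥(centredBox d n) → Fin q),
      0 < ν (cylinder d q n σ))
    (c : (Fin d → ℤ) → Fin q → ((Fin d → ℤ) → Fin q) → ℝ)
    (hc_meas : ∀ x j, Measurable (c x j))
    (hc_bdd : ∀ x, ∃ M : ℝ, ∀ j ω, c x j ω ≤ M)
    (δ : ℝ) (hδ : 0 < δ) (hc_lb : ∀ x j ω, δ ≤ c x j ω)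
    (n : ℕ) (hn : 1 ≤ n) (x : Fin d → ℤ) (hx : x ∈ centredBox d n) :
    0 ≤ alpha d q ν c n x ∧ alpha d q ν c n x ≤ alpha d q ν c (n + 1) x := by
  classical
  have hq0 : 0 < q := by omega
  have hint : ∀ j : Fin q, Integrable (c x j) ν := by
    intro j
    obtain ⟨M, hM⟩ := hc_bdd x
    refine Integrable.mono' (integrable_const M) (hc_meas x j).aestronglyMeasurable
      (Filter.Eventually.of_forall fun ω => ?_)
    rw [Real.norm_eq_abs, abs_of_pos (lt_of_lt_of_le hδ (hc_lb x j ω))]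
    exact hM j ω
  have hGpos : ∀ (m : ℕ) (j : Fin q) (σ : ↥(centredBox d m) → Fin q),
      0 < Gamma d q ν c m x j σ :=
    fun m j σ => Gamma_pos d q ν hν c m x j (hint j) hδ (hc_lb x j) σ
  constructor
  · rw [alpha, dif_pos hx]
    exact Finset.sum_nonneg fun σ _ => Finset.sum_nonneg fun i _ =>
      Phi_nonneg (hGpos n _ _) (hGpos n _ _)
  · have hx' : x ∈ centredBox d (n+1) := centredBox_subset_succ d n hx
    rw [alpha, alpha, dif_pos hx, dif_pos hx']
    rw [sum_fiber_split d q n hq0]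
    apply Finset.sum_le_sum
    intro σ _
    have key : ∀ i ∈ Finset.univ.filter fun i : Fin q => i ≠ σ ⟨x, hx⟩,
        Phi (Gamma d q ν c n x (σ ⟨x, hx⟩) (Function.update σ ⟨x, hx⟩ i))
            (Gamma d q ν c n x i σ)
          ≤ ∑ τ ∈ fiber d q n σ,
              Phi (Gamma d q ν c (n+1) x (σ ⟨x, hx⟩)
                    (Function.update τ ⟨x, centredBox_subset_succ d n hx⟩ i))
                  (Gamma d q ν c (n+1) x i τ) := by
      intro i _
      rw [Gamma_succ d q ν c n x (σ ⟨x, hx⟩) (hint _) (Function.update σ ⟨x, hx⟩ i),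
        Gamma_succ d q ν c n x i (hint _) σ,
        sum_fiber_update σ x hx i (Gamma d q ν c (n+1) x (σ ⟨x, hx⟩))]
      exact Phi_sum_le (fiber_nonempty d q n hq0 σ)
        (fun τ _ => hGpos (n+1) _ _) (fun τ _ => hGpos (n+1) _ _)
    calc ∑ i ∈ Finset.univ.filter fun i : Fin q => i ≠ σ ⟨x, hx⟩,
          Phi (Gamma d q ν c n x (σ ⟨x, hx⟩) (Function.update σ ⟨x, hx⟩ i))
              (Gamma d q ν c n x i σ)
        ≤ ∑ i ∈ Finset.univ.filter fun i : Fin q => i ≠ σ ⟨x, hx⟩,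
            ∑ τ ∈ fiber d q n σ,
              Phi (Gamma d q ν c (n+1) x (σ ⟨x, hx⟩)
                    (Function.update τ ⟨x, centredBox_subset_succ d n hx⟩ i))
                  (Gamma d q ν c (n+1) x i τ) := Finset.sum_le_sum key
      _ = ∑ τ ∈ fiber d q n σ,
            ∑ i ∈ Finset.univ.filter fun i : Fin q => i ≠ σ ⟨x, hx⟩,
              Phi (Gamma d q ν c (n+1) x (σ ⟨x, hx⟩)
                    (Function.update τ ⟨x, centredBox_subset_succ d n hx⟩ i))
                  (Gamma d q ν c (n+1) x i τ) := Finset.sum_comm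
      _ = ∑ τ ∈ fiber d q n σ,
            ∑ i ∈ Finset.univ.filter fun i : Fin q =>
                i ≠ τ ⟨x, centredBox_subset_succ d n hx⟩,
              Phi (Gamma d q ν c (n+1) x (τ ⟨x, centredBox_subset_succ d n hx⟩)
                    (Function.update τ ⟨x, centredBox_subset_succ d n hx⟩ i))
                  (Gamma d q ν c (n+1) x i τ) := by
          refine Finset.sum_congr rfl fun τ hτ => ?_
          have h1 : τ ⟨x, centredBox_subset_succ d n hx⟩ = σ ⟨x, hx⟩ := by
            have := congrFun (mem_fiber.1 hτ) ⟨x, hx⟩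
            simpa [resCfg] using this
          simp only [h1]
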